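/- If every substring in a partition of a string S' into k blocks, each of which is either a single character or a non-first occurrence (occurs earlier in S'), then the LZ77 parse of S' has at most 2k phrases. -/

import Mathlib

/-- `P` occurs in `S` starting at (0-indexed) position `i`. -/
def occursAt {α : Type*} (S P : List α) (i : ℕ) : Prop :=
  i + P.length ≤ S.length ∧ (S.drop i).take P.length = P

/-- Position in `S` where the `t`-th phrase of the parse `bs` begins
(equivalently, where the `(t-1)`-st phrase ends). -/
def phraseEnd {α : Type*} (bs : List (List α)) (t : ℕ) : ℕ :=
  ((bs.take t).flatten).length

/-- `bs` is the (greedy, non-self-referential) LZ77 parse of `S`: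
the phrases concatenate to `S`, each phrase is nonempty, each phrase minus its
last character has an occurrence ending at or before the phrase's start
(or the phrase is a single character), and greediness: unless the phrase reaches
the end of `S`, the whole phrase has no occurrence ending at or before its start. -/
def LZ77Parse {α : Type*} (S : List α) (bs : List (List α)) : Prop :=
  bs.flatten = S ∧ (∀ b ∈ bs, b ≠ []) ∧
  ∀ (t : ℕ) (ht : t < bs.length),
    ((bs.get ⟨t, ht⟩).length = 1 ∨
      ∃ j, occursAt S (bs.get ⟨t, ht⟩).dropLast j ∧
        j + (bs.get ⟨t, ht⟩).dropLast.length ≤ phraseEnd bs t ∧ j < phraseEnd bs t) ∧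
    (phraseEnd bs t + (bs.get ⟨t, ht⟩).length = S.length ∨
      ¬ ∃ j, occursAt S (bs.get ⟨t, ht⟩) j ∧
          j + (bs.get ⟨t, ht⟩).length ≤ phraseEnd bs t)

/-- An occurrence of a length-`m` pattern at position `i` is primary if it contains
the last position of some phrase, i.e. crosses a phrase boundary. -/
def PrimaryOcc {α : Type*} (bs : List (List α)) (i m : ℕ) : Prop :=
  ∃ t < bs.length, i < phraseEnd bs (t + 1) ∧ phraseEnd bs (t + 1) ≤ i + m


lemma phraseEnd_succ {α : Type*} (bs : List (List α)) (t : ℕ) (ht : t < bs.length) :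
    phraseEnd bs (t + 1) = phraseEnd bs t + (bs.get ⟨t, ht⟩).length := by
  unfold phraseEnd
  rw [List.take_succ, List.flatten_append, List.length_append]
  congr 1
  simp [List.getElem?_eq_getElem ht]

lemma phraseEnd_le {α : Type*} (bs : List (List α)) (n : ℕ) :
    phraseEnd bs n ≤ bs.flatten.length := by
  conv_rhs => rw [← List.take_append_drop n bs]
  rw [List.flatten_append, List.length_append]
  exact Nat.le_add_right _ _

lemma phraseEnd_full {α : Type*} (bs : List (List α)) (n : ℕ) (h : bs.length ≤ n) :
    phraseEnd bs n = bs.flatten.length := by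
  unfold phraseEnd
  rw [List.take_of_length_le h]

lemma drop_phraseEnd {α : Type*} (bs : List (List α)) (t : ℕ) :
    bs.flatten.drop (phraseEnd bs t) = (bs.drop t).flatten := by
  have : bs.flatten = (bs.take t).flatten ++ (bs.drop t).flatten := by
    rw [← List.flatten_append, List.take_append_drop]
  rw [this]
  exact List.drop_left

lemma get_eq_extract {α : Type*} (S : List α) (bs : List (List α)) (h : bs.flatten = S)
    (t : ℕ) (ht : t < bs.length) :
    (S.drop (phraseEnd bs t)).take (bs.get ⟨t, ht⟩).length = bs.get ⟨t, ht⟩ := by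
  rw [← h, drop_phraseEnd, List.drop_eq_getElem_cons ht, List.flatten_cons]
  exact List.take_left

lemma sub_extract {α : Type*} (S : List α) (j s m o L : ℕ)
    (h : (S.drop j).take m = (S.drop s).take m) (hoL : o + L ≤ m) :
    (S.drop (j + o)).take L = (S.drop (s + o)).take L := by
  have key : ∀ x : ℕ, (S.drop (x + o)).take L = (((S.drop x).take m).drop o).take L := by
    intro x
    rw [List.drop_take, List.take_take, ← List.drop_drop]
    congr 1
    omega
  rw [key j, key s, h]

/-- If `S'` can be partitioned into `k` blocks, each of which is a single
character or occurs earlier in `S'` (entirely before its own position), then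
the LZ77 parse of `S'` has at most `2 k` phrases. -/
theorem lz77_le_twice_blocks {α : Type*} (S' : List α) (parts cs : List (List α))
    (hjoin : parts.flatten = S') (hne : ∀ b ∈ parts, b ≠ [])
    (hblocks : ∀ (t : ℕ) (ht : t < parts.length),
      (parts.get ⟨t, ht⟩).length = 1 ∨
        ∃ j, occursAt S' (parts.get ⟨t, ht⟩) j ∧
          j + (parts.get ⟨t, ht⟩).length ≤ phraseEnd parts t)
    (hcs : LZ77Parse S' cs) :
    cs.length ≤ 2 * parts.length := by
  obtain ⟨hjoin', hne', hgre⟩ := hcs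
  have hSp : parts.flatten.length = S'.length := by rw [hjoin]
  have hSc : cs.flatten.length = S'.length := by rw [hjoin']
  have dom : ∀ t, t ≤ parts.length → phraseEnd parts t ≤ phraseEnd cs t := by
    intro t
    induction t with
    | zero => intro _; simp [phraseEnd]
    | succ t ih =>
      intro ht1
      have ht : t < parts.length := Nat.lt_of_succ_le ht1
      have ihp := ih (Nat.le_of_lt ht)
      by_cases htc : t < cs.length
      · rw [phraseEnd_succ parts t ht, phraseEnd_succ cs t htc]
        have hL1 : 1 ≤ (cs.get ⟨t, htc⟩).length :=
          List.length_pos_iff.mpr (hne' _ (List.get_mem _ _))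
        rcases hblocks t ht with h1 | ⟨j, ⟨hjlen, hjocc⟩, hjle⟩
        · omega
        · by_contra hlt
          push_neg at hlt
          have hqS : phraseEnd parts t + (parts.get ⟨t, ht⟩).length ≤ S'.length := by
            rw [← phraseEnd_succ parts t ht, ← hSp]
            exact phraseEnd_le parts (t + 1)
          have hsS : phraseEnd parts t ≤ S'.length := by
            rw [← hSp]; exact phraseEnd_le parts t
          have hbext : (S'.drop (phraseEnd parts t)).take (parts.get ⟨t, ht⟩).length
              = parts.get ⟨t, ht⟩ := get_eq_extract S' parts hjoin t ht
          have hcext : (S'.drop (phraseEnd cs t)).take (cs.get ⟨t, htc⟩).length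
              = cs.get ⟨t, htc⟩ := get_eq_extract S' cs hjoin' t htc
          have ho : (phraseEnd cs t - phraseEnd parts t) + (cs.get ⟨t, htc⟩).length
              ≤ (parts.get ⟨t, ht⟩).length := by omega
          have heq := sub_extract S' j (phraseEnd parts t) (parts.get ⟨t, ht⟩).length
            (phraseEnd cs t - phraseEnd parts t) (cs.get ⟨t, htc⟩).length
            (by rw [hjocc, hbext]) ho
          have hps : phraseEnd parts t + (phraseEnd cs t - phraseEnd parts t)
              = phraseEnd cs t := by omega
          rw [hps, hcext] at heq
          rcases (hgre t htc).2 with hend | hnocc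
          · omega
          · exact hnocc ⟨j + (phraseEnd cs t - phraseEnd parts t),
              ⟨⟨by omega, heq⟩, by omega⟩⟩
      · push_neg at htc
        have h1 : phraseEnd cs (t + 1) = S'.length := by
          rw [phraseEnd_full cs (t + 1) (by omega), hSc]
        rw [h1, ← hSp]
        exact phraseEnd_le parts (t + 1)
  have hdom := dom parts.length le_rfl
  rw [phraseEnd_full parts parts.length le_rfl, hSp] at hdom
  by_contra hgt
  push_neg at hgt
  have hlt : parts.length < cs.length := by omega
  have h2 : phraseEnd cs (parts.length + 1) ≤ S'.length := by
    rw [← hSc]; exact phraseEnd_le _ _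
  rw [phraseEnd_succ cs parts.length hlt] at h2
  have hL1 : 1 ≤ (cs.get ⟨parts.length, hlt⟩).length :=
    List.length_pos_iff.mpr (hne' _ (List.get_mem _ _))
  omega
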